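/- arXiv:1602.04797 — 6 statements merged into one kernel-verified Lean document; each statement's English description precedes it below -/
import Mathlib

section
/- Let p be an odd prime, G a finite group with a non-abelian simple normal subgroup S with C_G(S) = 1 and p dividing |S|, and P a Sylow p-subgroup of G with G = SP and |N_G(P)| odd. Then S ∩ P contains an element z of order p lying in the center Z(P) of P such that z is not conjugate in G to z^{-1}. -/
open Subgroup MulAction

theorem exists_nonreal_pcentral_element
    {G : Type*} [Group G] [Finite G] (p : ℕ) [Fact p.Prime] (hp2 : Odd p)
    (S : Subgroup G) (hSnormal : S.Normal) (hsimple : IsSimpleGroup S)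
    (hnonab : ¬ ∀ a b : S, a * b = b * a)
    (hcent : Subgroup.centralizer (S : Set G) = ⊥)
    (hpS : p ∣ Nat.card S)
    (P : Sylow p G)
    (hSP : ∀ g : G, ∃ s ∈ S, ∃ x ∈ (P : Subgroup G), g = s * x)
    (hodd : Odd (Nat.card (Subgroup.normalizer ((P : Subgroup G) : Set G)))) :
    ∃ z : G, z ∈ S ⊓ (P : Subgroup G) ∧ orderOf z = p ∧
      z ∈ Subgroup.centralizer ((P : Subgroup G) : Set G) ∧
      ¬ IsConj z z⁻¹ := by
  classical
  have hp : p.Prime := Fact.out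
  -- Step 1: S ⊓ P is nontrivial
  obtain ⟨x, hx⟩ := exists_prime_orderOf_dvd_card' (G := ↥S) p hpS
  have hxG : orderOf (x : G) = p := by rw [Subgroup.orderOf_coe, hx]
  have hpgroup : IsPGroup p (zpowers (x : G)) :=
    IsPGroup.of_card (by rw [Nat.card_zpowers, hxG, pow_one])
  obtain ⟨Q, hQ⟩ := hpgroup.exists_le_sylow
  obtain ⟨g, hg⟩ := MulAction.exists_smul_eq G Q P
  have hxQ : (x : G) ∈ (Q : Subgroup G) := hQ (mem_zpowers _)
  have hz0P : g * x * g⁻¹ ∈ (P : Subgroup G) := by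
    rw [← hg, Sylow.coe_subgroup_smul]
    have := Subgroup.smul_mem_pointwise_smul (x : G) (MulAut.conj g) (Q : Subgroup G) hxQ
    simpa using this
  have hz0S : g * x * g⁻¹ ∈ S := hSnormal.conj_mem _ x.2 g
  have hz0ne : g * (x : G) * g⁻¹ ≠ 1 := by
    intro h
    have : (x : G) = 1 := by
      have := congrArg (fun t => g⁻¹ * t * g) h
      simpa [mul_assoc] using this
    rw [this, orderOf_one] at hxG
    exact hp.ne_one hxG.symm
  -- Step 2: conjugation action of P on S ⊓ P has a nontrivial fixed point
  set N : Subgroup G := S ⊓ (P : Subgroup G) with hN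
  have hmemN : ∀ (a : ↥(P : Subgroup G)) (b : ↥N), (a : G) * b * (a : G)⁻¹ ∈ N := by
    rintro a ⟨b, hbS, hbP⟩
    exact ⟨hSnormal.conj_mem _ hbS _, mul_mem (mul_mem a.2 hbP) ((P : Subgroup G).inv_mem a.2)⟩
  letI : SMul ↥(P : Subgroup G) ↥N := ⟨fun a b => ⟨a * b * (a : G)⁻¹, hmemN a b⟩⟩
  have smul_def' : ∀ (a : ↥(P : Subgroup G)) (b : ↥N),
      (a • b : ↥N) = ⟨a * b * (a : G)⁻¹, hmemN a b⟩ := fun _ _ => rfl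
  letI : MulAction ↥(P : Subgroup G) ↥N :=
    { one_smul := fun b => by ext; simp [smul_def']
      mul_smul := fun a a' b => by ext; simp [smul_def', mul_assoc] }
  have hNpgroup : IsPGroup p N := IsPGroup.to_inf_right (H := S) P.isPGroup'
  have hNcard : p ∣ Nat.card ↥N := by
    rcases hNpgroup.card_eq_or_dvd with h | h
    · exact absurd (Subgroup.card_eq_one.mp h ▸ ⟨hz0S, hz0P⟩ : g * x * g⁻¹ ∈ (⊥ : Subgroup G))
        (by simpa using hz0ne)
    · exact h
  have h1fix : (1 : ↥N) ∈ fixedPoints ↥(P : Subgroup G) ↥N := by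
    intro a
    ext
    simp [smul_def']
  obtain ⟨b, hbfix, hbne⟩ := (P.isPGroup').exists_fixed_point_of_prime_dvd_card_of_fixed_point ↥N hNcard h1fix
  have hbcent : (b : G) ∈ Subgroup.centralizer ((P : Subgroup G) : Set G) := by
    rw [Subgroup.mem_centralizer_iff]
    intro a ha
    have := hbfix ⟨a, ha⟩
    rw [smul_def'] at this
    have h2 : a * (b : G) * a⁻¹ = b := congrArg Subtype.val this
    have h3 : a * (b : G) = (a * b * a⁻¹) * a := by group
    rw [h3, h2]
  have hbP : (b : G) ∈ (P : Subgroup G) := b.2.2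
  have hbne1 : (b : G) ≠ 1 := by
    intro h
    apply hbne
    ext
    simp [h]
  -- b has order p ^ j with j ≥ 1
  obtain ⟨k, hk⟩ := P.isPGroup' ⟨b, hbP⟩
  have hkG : (b : G) ^ p ^ k = 1 := by
    have := congrArg (Subtype.val) hk
    simpa using this
  obtain ⟨j, hjk, hj⟩ := (Nat.dvd_prime_pow hp).mp (orderOf_dvd_of_pow_eq_one hkG)
  have hj0 : j ≠ 0 := by
    intro h
    rw [h, pow_zero, orderOf_eq_one_iff] at hj
    exact hbne1 hj
  -- Step 3: the element z of order p
  set z : G := (b : G) ^ p ^ (j - 1) with hzdef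
  have hzp : z ^ p = 1 := by
    rw [hzdef, ← pow_mul, ← pow_succ, Nat.sub_add_cancel (Nat.one_le_iff_ne_zero.mpr hj0),
      ← hj, pow_orderOf_eq_one]
  have hzne : z ≠ 1 := by
    rw [hzdef]
    apply pow_ne_one_of_lt_orderOf
    · exact pow_ne_zero _ hp.pos.ne'
    · rw [hj]
      exact Nat.pow_lt_pow_right hp.one_lt (Nat.pred_lt hj0)
  have hzord : orderOf z = p := orderOf_eq_prime hzp hzne
  have hzN : z ∈ N := pow_mem b.2 _
  have hzcent : z ∈ Subgroup.centralizer ((P : Subgroup G) : Set G) :=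
    pow_mem hbcent _
  refine ⟨z, hzN, hzord, hzcent, ?_⟩
  -- Step 4: z is not conjugate to z⁻¹
  intro hconj
  rw [isConj_iff] at hconj
  obtain ⟨c, hc⟩ := hconj
  have hzcent' : (c⁻¹)⁻¹ * z * c⁻¹ ∈ Subgroup.centralizer ((P : Subgroup G) : Set G) := by
    rw [inv_inv, hc]
    exact inv_mem hzcent
  obtain ⟨n, hn, hnz⟩ := P.conj_eq_normalizer_conj_of_mem_centralizer z c⁻¹ hzcent hzcent'
  rw [inv_inv, hc] at hnz
  -- hnz : z⁻¹ = n⁻¹ * z * n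
  set m := orderOf n with hm
  have hcoe : orderOf n = orderOf (⟨n, hn⟩ : Subgroup.normalizer ((P : Subgroup G) : Set G)) :=
    Subgroup.orderOf_coe (⟨n, hn⟩ : Subgroup.normalizer ((P : Subgroup G) : Set G))
  have hmdvd : m ∣ Nat.card (Subgroup.normalizer ((P : Subgroup G) : Set G)) := by
    rw [hm, hcoe]; exact orderOf_dvd_natCard _
  have hmodd : Odd m := by
    rw [← Nat.not_even_iff_odd]
    intro he
    exact (Nat.not_even_iff_odd.mpr hodd)
      (even_iff_two_dvd.mpr ((even_iff_two_dvd.mp he).trans hmdvd))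
  have hnm : n ^ m = 1 := by
    have h := congrArg Subtype.val (pow_orderOf_eq_one (⟨n, hn⟩ : Subgroup.normalizer ((P : Subgroup G) : Set G)))
    rw [hm, hcoe]
    simpa using h
  have key : ∀ k : ℕ, (n ^ k)⁻¹ * z * n ^ k = z ^ ((-1 : ℤ) ^ k) := by
    intro k
    induction k with
    | zero => simp
    | succ k ih =>
      have h1 : (n ^ (k + 1))⁻¹ * z * n ^ (k + 1)
          = n⁻¹ * ((n ^ k)⁻¹ * z * n ^ k) * n := by
        rw [pow_succ]; group
      rw [h1, ih]
      have h2 : n⁻¹ * z ^ ((-1 : ℤ) ^ k) * n = (n⁻¹ * z * n)^((-1 : ℤ) ^ k) := by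
        have := @conj_zpow G _ ((-1 : ℤ) ^ k) n⁻¹ z
        simpa using this.symm
      rw [h2, ← hnz, ← zpow_neg_one, ← zpow_mul, pow_succ]
      ring_nf
  have hzz : z = z⁻¹ := by
    have h := key m
    rw [hnm, hmodd.neg_one_pow, zpow_neg_one] at h
    simpa using h
  have hz2 : z ^ 2 = 1 := by
    rw [pow_two]; nth_rewrite 2 [hzz]; exact mul_inv_cancel z
  have hpd : p ∣ 2 := hzord ▸ orderOf_dvd_of_pow_eq_one hz2
  have : p = 2 := (Nat.prime_dvd_prime_iff_eq hp Nat.prime_two).mp hpd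
  rw [this, Nat.odd_iff] at hp2
  omega
end

section
/- Let p be an odd prime, G a finite group with a non-abelian simple normal subgroup S with C_G(S) = 1 and p dividing |S|, and P a Sylow p-subgroup of G with G = SP and |N_G(P)| odd. Then every p-element y ≠ 1 of S that lies in the center of some Sylow p-subgroup of G is not conjugate in G to y^{-1}. -/
private lemma conj_inv_eq {G : Type*} [Group G] {a y z : G} (h : a * y * a⁻¹ = z) :
    a * y⁻¹ * a⁻¹ = z⁻¹ := by
  rw [← h]; group

private lemma commute_conj {G : Type*} [Group G] {a b : G} (c : G) (h : a * b = b * a) :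
    (c * a * c⁻¹) * (c * b * c⁻¹) = (c * b * c⁻¹) * (c * a * c⁻¹) := by
  calc (c * a * c⁻¹) * (c * b * c⁻¹) = c * (a * b) * c⁻¹ := by group
    _ = c * (b * a) * c⁻¹ := by rw [h]
    _ = (c * b * c⁻¹) * (c * a * c⁻¹) := by group

theorem pcentral_pelements_nonreal
    {G : Type*} [Group G] [Finite G] (p : ℕ) [Fact p.Prime] (hp2 : Odd p)
    (S : Subgroup G) (hSnormal : S.Normal) (hsimple : IsSimpleGroup S)
    (hnonab : ¬ ∀ a b : S, a * b = b * a)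
    (hcent : Subgroup.centralizer (S : Set G) = ⊥)
    (hpS : p ∣ Nat.card S)
    (P : Sylow p G)
    (hSP : ∀ g : G, ∃ s ∈ S, ∃ x ∈ (P : Subgroup G), g = s * x)
    (hodd : Odd (Nat.card (Subgroup.normalizer ((P : Subgroup G) : Set G))))
    (y : G) (hyS : y ∈ S) (hy1 : y ≠ 1) (hyp : ∃ k : ℕ, orderOf y = p ^ k)
    (hc : ∃ Q : Sylow p G, y ∈ (Q : Subgroup G) ∧
      y ∈ Subgroup.centralizer ((Q : Subgroup G) : Set G)) :
    ¬ IsConj y y⁻¹ := by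
  intro hconj
  obtain ⟨Q, hyQ, hyZ⟩ := hc
  obtain ⟨g, hg⟩ := isConj_iff.mp hconj
  -- Q is contained in the centralizer of y
  have hQC : (Q : Subgroup G) ≤ Subgroup.centralizer {y} := by
    intro q hq
    rw [Subgroup.mem_centralizer_iff]
    intro z hz
    rw [Set.mem_singleton_iff] at hz
    rw [hz]
    exact (Subgroup.mem_centralizer_iff.mp hyZ q hq).symm
  -- so is g • Q
  have hQ'C : ((g • Q : Sylow p G) : Subgroup G) ≤ Subgroup.centralizer {y} := by
    intro x hx
    rw [Sylow.coe_subgroup_smul, Subgroup.mem_pointwise_smul_iff_inv_smul_mem] at hx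
    have hx' : g⁻¹ * x * g ∈ (Q : Subgroup G) := by
      simpa [MulAut.smul_def, MulAut.conj_inv_apply] using hx
    rw [Subgroup.mem_centralizer_iff]
    intro z hz
    rw [Set.mem_singleton_iff] at hz
    rw [hz]
    have hq : (g⁻¹ * x * g) * y = y * (g⁻¹ * x * g) :=
      Subgroup.mem_centralizer_iff.mp hyZ _ hx'
    have h1 := commute_conj g hq
    have h2 : g * (g⁻¹ * x * g) * g⁻¹ = x := by group
    rw [h2, hg] at h1
    -- h1 : x * y⁻¹ = y⁻¹ * x
    have h3 : Commute x y⁻¹ := h1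
    have h4 : Commute x y := by simpa using h3.inv_right
    exact h4.eq.symm
  -- Q and g • Q are Sylow p-subgroups of the centralizer, hence conjugate in it
  obtain ⟨c, hcc⟩ := MulAction.exists_smul_eq (↥(Subgroup.centralizer {y}))
    (Q.subtype hQC) ((g • Q).subtype hQ'C)
  rw [Sylow.smul_subtype] at hcc
  have hsub : ((c • Q : Sylow p G) : Subgroup G).subgroupOf (Subgroup.centralizer {y})
      = ((g • Q : Sylow p G) : Subgroup G).subgroupOf (Subgroup.centralizer {y}) := by
    have := congrArg (fun (R : Sylow p (↥(Subgroup.centralizer {y}))) =>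
      (R : Subgroup ↥(Subgroup.centralizer {y}))) hcc
    simpa [Sylow.coe_subtype] using this
  have hcQ : (c • Q : Sylow p G) = (g • Q : Sylow p G) := by
    apply Sylow.ext
    have h1 : ((c • Q : Sylow p G) : Subgroup G) ≤ Subgroup.centralizer {y} :=
      Sylow.smul_le hQC c
    have := Subgroup.subgroupOf_inj.mp hsub
    rwa [inf_eq_left.mpr h1, inf_eq_left.mpr hQ'C] at this
  -- m normalizes Q and conjugates y to y⁻¹
  obtain ⟨m, hmdef⟩ : ∃ m : G, m = (c : G)⁻¹ * g := ⟨_, rfl⟩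
  have hmQ : m • Q = Q := by
    have hc' : (c : G) • Q = g • Q := by rwa [← Subgroup.smul_def]
    rw [hmdef, mul_smul, ← hc', ← mul_smul, inv_mul_cancel, one_smul]
  have hmN : m ∈ Subgroup.normalizer ((Q : Subgroup G) : Set G) := Sylow.smul_eq_iff_mem_normalizer.mp hmQ
  have hcy : y * (c : G) = (c : G) * y :=
    Subgroup.mem_centralizer_iff.mp c.2 y rfl
  have hcomm : Commute ((c : G))⁻¹ y⁻¹ := by
    have h0 : Commute (c : G) y := hcy.symm
    exact h0.inv_left.inv_right
  have hmy : m * y * m⁻¹ = y⁻¹ := by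
    have h1 : m * y * m⁻¹ = (c : G)⁻¹ * (g * y * g⁻¹) * (c : G) := by
      rw [hmdef]; group
    rw [h1, hg]
    calc (c : G)⁻¹ * y⁻¹ * (c : G) = y⁻¹ * (c : G)⁻¹ * (c : G) := by rw [hcomm.eq]
      _ = y⁻¹ := by group
  -- |N_G(Q)| is odd since Q is conjugate to P
  obtain ⟨h, hh⟩ := MulAction.exists_smul_eq G P Q
  have hoddQ : Odd (Nat.card (Subgroup.normalizer ((Q : Subgroup G) : Set G))) := by
    have hQP : (Q : Subgroup G) = Subgroup.map (MulAut.conj h).toMonoidHom (P : Subgroup G) := by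
      rw [← hh, Sylow.coe_subgroup_smul, Subgroup.pointwise_smul_def]
      rfl
    have hnorm : Subgroup.normalizer ((Q : Subgroup G) : Set G)
        = Subgroup.map (MulAut.conj h).toMonoidHom (Subgroup.normalizer ((P : Subgroup G) : Set G)) := by
      rw [hQP, Subgroup.map_equiv_normalizer_eq]
    rw [hnorm]
    have hcard : Nat.card (Subgroup.map (MulAut.conj h).toMonoidHom (Subgroup.normalizer ((P : Subgroup G) : Set G)))
        = Nat.card (Subgroup.normalizer ((P : Subgroup G) : Set G)) :=
      Nat.card_congr (Subgroup.equivMapOfInjective _ _ (MulAut.conj h).injective).toEquiv.symm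
    rw [hcard]
    exact hodd
  -- m has odd order
  have hmdvd : orderOf m ∣ Nat.card (Subgroup.normalizer ((Q : Subgroup G) : Set G)) :=
    Subgroup.orderOf_dvd_natCard _ hmN
  have hmodd : Odd (orderOf m) := by
    rcases Nat.even_or_odd (orderOf m) with he | ho
    · exfalso
      obtain ⟨k, hk⟩ := he
      have h2d : 2 ∣ Nat.card (Subgroup.normalizer ((Q : Subgroup G) : Set G)) :=
        dvd_trans ⟨k, by omega⟩ hmdvd
      rw [Nat.odd_iff] at hoddQ
      omega
    · exact ho
  obtain ⟨k, hk⟩ := hmodd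
  -- m² commutes with y
  have h2 : Commute (m ^ 2) y := by
    have h3 : m * y⁻¹ * m⁻¹ = y := by
      have := conj_inv_eq hmy
      simpa using this
    have h4 : m ^ 2 * y * (m ^ 2)⁻¹ = y := by
      rw [pow_two]
      calc m * m * y * (m * m)⁻¹ = m * (m * y * m⁻¹) * m⁻¹ := by group
        _ = m * y⁻¹ * m⁻¹ := by rw [hmy]
        _ = y := h3
    have := congrArg (fun t => t * m ^ 2) h4
    have h5 : m ^ 2 * y = y * m ^ 2 := by simpa [mul_assoc] using this
    exact h5
  have hky : Commute ((m ^ 2) ^ k) y := h2.pow_left k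
  -- conclude y = y⁻¹
  have hyy : y = y⁻¹ := by
    have hm1 : m ^ (2 * k + 1) = 1 := by rw [← hk, pow_orderOf_eq_one]
    have hconjpow : m ^ (2 * k + 1) * y * (m ^ (2 * k + 1))⁻¹ = y⁻¹ := by
      have hsplit : m ^ (2 * k + 1) = (m ^ 2) ^ k * m := by
        rw [← pow_mul, pow_succ]
      rw [hsplit]
      have hkyinv : Commute ((m ^ 2) ^ k) y⁻¹ := hky.inv_right
      calc (m ^ 2) ^ k * m * y * ((m ^ 2) ^ k * m)⁻¹
          = (m ^ 2) ^ k * (m * y * m⁻¹) * ((m ^ 2) ^ k)⁻¹ := by group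
        _ = (m ^ 2) ^ k * y⁻¹ * ((m ^ 2) ^ k)⁻¹ := by rw [hmy]
        _ = y⁻¹ * (m ^ 2) ^ k * ((m ^ 2) ^ k)⁻¹ := by rw [hkyinv.eq]
        _ = y⁻¹ := by group
    rw [hm1] at hconjpow
    simpa using hconjpow
  -- y = y⁻¹ forces y to have order dividing 2, contradiction with p odd
  have hy2 : y ^ 2 = 1 := by
    rw [pow_two]
    nth_rewrite 1 [hyy]
    simp
  have hdvd : orderOf y ∣ 2 := orderOf_dvd_of_pow_eq_one hy2
  obtain ⟨j, hj⟩ := hyp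
  rw [hj] at hdvd
  rcases Nat.eq_zero_or_pos j with hj0 | hjpos
  · subst hj0
    simp at hj
    exact hy1 hj
  · have hpdvd : p ∣ 2 := dvd_trans (dvd_pow_self p hjpos.ne') hdvd
    have hp := (Fact.out : p.Prime)
    have hp2' : p = 2 := (Nat.prime_dvd_prime_iff_eq hp Nat.prime_two).mp hpdvd
    rw [hp2', Nat.odd_iff] at hp2
    omega
end

section
/- Let p be an odd prime and n ≥ p + 2 a natural number. Then every element t of order p in the alternating group Alt(n) is real in Alt(n), i.e. t is conjugate in Alt(n) to t^{-1}. -/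
open Equiv Equiv.Perm Finset

theorem my_noncommProd_eq_of_eq {G : Type*} [Monoid G] {s s' : Multiset G} (h : s = s')
    (c : _) (c' : _) : s.noncommProd c = s'.noncommProd c' := by subst h; rfl

theorem my_noncommProd_perm {α G : Type*} [Fintype α] [DecidableEq α] [Monoid G]
    (e : Equiv.Perm α) (f : α → G) (comm) (comm') :
    Finset.univ.noncommProd (fun i => f (e i)) comm' = Finset.univ.noncommProd f comm := by
  refine my_noncommProd_eq_of_eq ?_ _ _
  have h1 : (Finset.univ.1 : Multiset α) = Finset.univ.1.map e := by
    have := Finset.map_univ_equiv e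
    calc (Finset.univ.1 : Multiset α) = (Finset.univ.map e.toEmbedding).1 := by rw [this]
    _ = Finset.univ.1.map e := Finset.map_val _ _
  conv_rhs => rw [h1]
  rw [Multiset.map_map]
  rfl

theorem alternating_order_p_real
    (p : ℕ) (hp : p.Prime) (hodd : Odd p) (n : ℕ) (hn : p + 2 ≤ n)
    (t : alternatingGroup (Fin n)) (ht : orderOf t = p) :
    IsConj t t⁻¹ := by
  haveI : NeZero p := ⟨hp.ne_zero⟩
  haveI : Fact (1 < p) := ⟨hp.one_lt⟩
  set u : Perm (Fin n) := (t : Perm (Fin n)) with hu_def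
  have hu : orderOf u = p := by
    rw [← ht]; exact orderOf_submonoid t
  have hconjS : IsConj u u⁻¹ := isConj_iff_cycleType_eq.mpr (cycleType_inv u).symm
  by_cases hcard : u.support.card + 2 ≤ n
  · exact alternatingGroup.isConj_of (σ := t) (τ := t⁻¹) (by exact hconjS)
      (by simpa using hcard)
  -- hard case : support is almost everything
  push_neg at hcard
  have hsupp : n - 1 ≤ u.support.card := by omega
  -- pick a point in the support
  have hne : u ≠ 1 := by
    intro h; rw [h, orderOf_one] at hu; exact hp.ne_one hu.symm
  have hA : u.support.Nonempty := by
    rw [Finset.nonempty_iff_ne_empty, Ne, Equiv.Perm.support_eq_empty_iff]; exact hne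
  obtain ⟨a, ha⟩ := hA
  -- the cycle of a has order p and support of size p
  have hua : u a ≠ a := by rwa [Equiv.Perm.mem_support] at ha
  have hcyc : (u.cycleOf a).IsCycle := Equiv.Perm.isCycle_cycleOf u hua
  have hordc : orderOf (u.cycleOf a) = p := by
    have hdvd : orderOf (u.cycleOf a) ∣ p := by
      apply orderOf_dvd_of_pow_eq_one
      apply hcyc.pow_eq_one_iff.mpr
      refine ⟨a, ?_, ?_⟩
      · rwa [Equiv.Perm.cycleOf_apply_self]
      · rw [Equiv.Perm.cycleOf_pow_apply_self, ← hu, pow_orderOf_eq_one, Equiv.Perm.one_apply]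
    rcases (Nat.Prime.eq_one_or_self_of_dvd hp _ hdvd) with h | h
    · exact absurd (orderOf_eq_one_iff.mp h) hcyc.ne_one
    · exact h
  have hcardc : (u.cycleOf a).support.card = p := by
    rw [← hcyc.orderOf, hordc]
  -- find b in support, outside the cycle of a
  have hsub : ¬ u.support ⊆ (u.cycleOf a).support := by
    intro h
    have := Finset.card_le_card h
    omega
  obtain ⟨b, hb, hbc⟩ := Finset.not_subset.mp hsub
  have hub : u b ≠ b := by rwa [Equiv.Perm.mem_support] at hb
  -- key injectivity facts
  have fixlem : ∀ (y : Fin n), y ∈ u.support → ∀ k : ℕ, k < p → (u ^ k) y = y → k = 0 := by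
    intro y hy k hkp hk
    by_contra hk0
    have hy' : u y ≠ y := by rwa [Equiv.Perm.mem_support] at hy
    apply hy'
    haveI : Fact p.Prime := ⟨hp⟩
    set m : ZMod p := (k : ZMod p) with hm_def
    have hmval : m.val = k := ZMod.val_cast_of_lt hkp
    have hm0 : m ≠ 0 := by
      intro h
      rw [h, ZMod.val_zero] at hmval
      exact hk0 hmval.symm
    have hiter : ∀ l : ℕ, (u ^ (k * l)) y = y := by
      intro l
      induction l with
      | zero => simp
      | succ l ih =>
        rw [Nat.mul_succ, pow_add, Equiv.Perm.mul_apply, hk, ih]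
    have hval : (m * m⁻¹).val = 1 := by
      rw [ZMod.mul_inv_of_unit m (Ne.isUnit hm0), ZMod.val_one]
    have h2 := hiter (m⁻¹).val
    rw [← pow_mod_orderOf, hu, ← hmval, ← ZMod.val_mul, hval, pow_one] at h2
    exact h2
  have hinj : ∀ (y : Fin n), y ∈ u.support → ∀ i j : ZMod p,
      (u ^ i.val) y = (u ^ j.val) y → i = j := by
    have key : ∀ (y : Fin n), y ∈ u.support → ∀ i j : ZMod p, j.val ≤ i.val →
        (u ^ i.val) y = (u ^ j.val) y → i = j := by
      intro y hy i j hle hij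
      have h1 : (u ^ (i.val - j.val)) ((u ^ j.val) y) = (u ^ j.val) y := by
        rw [← Equiv.Perm.mul_apply, ← pow_add, Nat.sub_add_cancel hle, hij]
      have h2 : (u ^ j.val) y ∈ u.support := Equiv.Perm.pow_apply_mem_support.mpr hy
      have h3 := fixlem _ h2 (i.val - j.val) (by have := ZMod.val_lt i; omega) h1
      have : i.val = j.val := by omega
      exact ZMod.val_injective p this
    intro y hy i j hij
    rcases le_total j.val i.val with h | h
    · exact key y hy i j h hij
    · exact (key y hy j i h hij.symm).symm
  -- points in the orbit of a and orbit of b never collide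
  have hab : ∀ i j : ZMod p, (u ^ i.val) a ≠ (u ^ j.val) b := by
    intro i j h
    apply hbc
    rw [Equiv.Perm.mem_support_cycleOf_iff]
    constructor
    · have h1 : u.SameCycle a ((u ^ i.val) a) := ⟨(i.val : ℤ), by rw [zpow_natCast]⟩
      have h2 : u.SameCycle b ((u ^ j.val) b) := ⟨(j.val : ℤ), by rw [zpow_natCast]⟩
      exact (h1.trans (h ▸ h2.symm))
    · exact ha
  -- the swapping permutation
  set f : ZMod p → Perm (Fin n) := fun i => Equiv.swap ((u ^ i.val) a) ((u ^ i.val) b) with hf_def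
  have hdisj : ∀ i j : ZMod p, i ≠ j → Commute (f i) (f j) := by
    intro i j hij
    apply Equiv.Perm.Disjoint.commute
    intro x
    by_cases hx : x = (u ^ j.val) a ∨ x = (u ^ j.val) b
    · left
      rcases hx with hx | hx <;> subst hx <;>
        apply Equiv.swap_apply_of_ne_of_ne
      · intro h; exact hij (hinj a ha j i h).symm
      · intro h; exact hab j i h
      · intro h; exact (hab i j h.symm)
      · intro h; exact hij (hinj b hb j i h).symm
    · right
      push_neg at hx
      exact Equiv.swap_apply_of_ne_of_ne hx.1 hx.2
  have hcomm : (↑(Finset.univ : Finset (ZMod p)) : Set (ZMod p)).Pairwise (Function.onFun Commute f) :=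
    fun i _ j _ hij => hdisj i j hij
  set τ : Perm (Fin n) := Finset.univ.noncommProd f hcomm with hτ_def
  -- τ commutes with u
  have hstep : ∀ i : ZMod p, u * f i * u⁻¹ = f (i + 1) := by
    intro i
    have h1 : ∀ x : Fin n, u ((u ^ i.val) x) = (u ^ (i + 1).val) x := by
      intro x
      rw [← Equiv.Perm.mul_apply, ← pow_succ']
      have hmod := pow_mod_orderOf u (i.val + 1)
      rw [hu] at hmod
      rw [ZMod.val_add, ZMod.val_one, hmod]
    rw [hf_def]
    simp only
    rw [← Equiv.swap_apply_apply, h1, h1]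
  have hcomm' : (↑(Finset.univ : Finset (ZMod p)) : Set (ZMod p)).Pairwise
      (Function.onFun Commute fun i => f ((Equiv.addRight (1 : ZMod p)) i)) :=
    fun i _ j _ hij => hdisj (i + 1) (j + 1) (fun h => hij (add_right_cancel h))
  have hcommut : Commute u τ := by
    have h1 : (MulAut.conj u) τ = τ := by
      rw [hτ_def, Finset.map_noncommProd]
      refine Eq.trans ?_ (my_noncommProd_perm (Equiv.addRight (1 : ZMod p)) f hcomm hcomm')
      refine Eq.trans (Finset.noncommProd_congr rfl
        (g := fun i => f ((Equiv.addRight (1 : ZMod p)) i)) (fun x _ => ?_) _) rfl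
      simp only [MulAut.conj_apply, Equiv.coe_addRight]
      exact hstep x
    rw [MulAut.conj_apply, mul_inv_eq_iff_eq_mul] at h1
    rw [Commute, SemiconjBy, h1]
  -- τ is odd
  have hsign : Equiv.Perm.sign τ = -1 := by
    rw [hτ_def, Finset.map_noncommProd]
    have h1 : ∀ i ∈ (Finset.univ : Finset (ZMod p)),
        Equiv.Perm.sign (f i) = (-1 : ℤˣ) := by
      intro i _
      rw [hf_def]
      simp only
      apply Equiv.Perm.sign_swap
      exact hab i i
    refine (Finset.noncommProd_eq_pow_card _ _ _ _ h1).trans ?_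
    rw [Finset.card_univ, ZMod.card]
    exact Odd.neg_one_pow hodd
  -- assemble
  obtain ⟨σ, hσ⟩ := isConj_iff.mp hconjS
  rcases Int.units_eq_one_or (Equiv.Perm.sign σ) with h | h
  · rw [isConj_iff]
    refine ⟨⟨σ, Equiv.Perm.mem_alternatingGroup.mpr h⟩, Subtype.val_injective ?_⟩
    simpa using hσ
  · rw [isConj_iff]
    refine ⟨⟨σ * τ, Equiv.Perm.mem_alternatingGroup.mpr ?_⟩, Subtype.val_injective ?_⟩
    · rw [map_mul, h, hsign]
      simp
    · have hτu : τ * u * τ⁻¹ = u := by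
        rw [← hcommut.eq]
        group
      have : (σ * τ) * u * (σ * τ)⁻¹ = u⁻¹ := by
        rw [mul_inv_rev, show σ * τ * u * (τ⁻¹ * σ⁻¹) = σ * (τ * u * τ⁻¹) * σ⁻¹ by group,
          hτu, hσ]
      simpa using this
end

section
/- Let p be an odd prime, n ≥ p + 2 a natural number, and Q a Sylow p-subgroup of the alternating group Alt(n). Then the order of the normalizer N_{Alt(n)}(Q) is even. -/
open Equiv Equiv.Perm Subgroup

namespace AltSylowEven

variable {p : ℕ} [Fact p.Prime] {a r : ℕ}

/-- translation by `v i` in block `i` -/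
def shear (p : ℕ) [Fact p.Prime] {a : ℕ} (v : Fin a → ZMod p) : Perm (Fin a × ZMod p) where
  toFun x := (x.1, x.2 + v x.1)
  invFun x := (x.1, x.2 - v x.1)
  left_inv x := by simp
  right_inv x := by simp

@[simp] lemma shear_apply (v : Fin a → ZMod p) (x : Fin a × ZMod p) :
    shear p v x = (x.1, x.2 + v x.1) := rfl

lemma shear_mul (v w : Fin a → ZMod p) : shear p v * shear p w = shear p (v + w) := by
  ext x
  · simp [Perm.mul_apply]
  · simp [Perm.mul_apply]; ring

lemma shear_zero : shear p (0 : Fin a → ZMod p) = 1 := by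
  ext x
  · simp
  · simp

/-- base subgroup hom -/
def baseHom (p : ℕ) [Fact p.Prime] (a : ℕ) : Multiplicative (Fin a → ZMod p) →* Perm (Fin a × ZMod p) :=
  MonoidHom.mk' (fun v => shear p (Multiplicative.toAdd v)) (by
    intro v w
    rw [shear_mul]
    rfl)

@[simp] lemma baseHom_apply (v : Multiplicative (Fin a → ZMod p)) :
    baseHom p a v = shear p (Multiplicative.toAdd v) := rfl

lemma baseHom_injective : Function.Injective (baseHom p a) := by
  intro v w h
  have h2 := Equiv.ext_iff.mp h
  have h3 : Multiplicative.toAdd v = Multiplicative.toAdd w := by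
    funext i
    simpa using congrArg Prod.snd (h2 (i, 0))
  exact Multiplicative.toAdd.injective h3

/-- block permutation lift -/
def blockLift (p : ℕ) [Fact p.Prime] (a : ℕ) : Perm (Fin a) →* Perm (Fin a × ZMod p) :=
  MonoidHom.mk' (fun σ => σ.prodCongr (Equiv.refl _)) (by
    intro σ τ
    ext x <;> simp [Perm.mul_apply])

@[simp] lemma blockLift_apply (σ : Perm (Fin a)) (x : Fin a × ZMod p) :
    blockLift p a σ x = (σ x.1, x.2) := rfl

/-- in-block negation on all blocks -/
def blockNeg (p : ℕ) [Fact p.Prime] (a : ℕ) : Perm (Fin a × ZMod p) :=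
  (Equiv.refl (Fin a)).prodCongr (Equiv.neg (ZMod p))

@[simp] lemma blockNeg_apply (x : Fin a × ZMod p) : blockNeg p a x = (x.1, -x.2) := rfl
def ιh (p : ℕ) [Fact p.Prime] (a r : ℕ) :
    Perm (Fin a × ZMod p) →* Perm ((Fin a × ZMod p) ⊕ Fin r) :=
  (Equiv.Perm.sumCongrHom _ _).comp (MonoidHom.inl _ _)

@[simp] lemma ιh_apply (σ : Perm (Fin a × ZMod p)) :
    ιh p a r σ = Equiv.sumCongr σ (1 : Perm (Fin r)) := rfl

lemma ιh_injective : Function.Injective (ιh p a r) := by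
  intro x y h
  have h2 := Equiv.Perm.sumCongrHom_injective (α := Fin a × ZMod p) (β := Fin r) h
  exact congrArg Prod.fst h2

lemma ιh_comm_inr (σ : Perm (Fin a × ZMod p)) (τ : Perm (Fin r)) :
    ιh p a r σ * Equiv.sumCongr 1 τ = Equiv.sumCongr 1 τ * ιh p a r σ := by
  ext x
  cases x <;> simp [Perm.mul_apply]

lemma blockNeg_mul_self : blockNeg p a * blockNeg p a = 1 := by
  ext x
  · simp [Perm.mul_apply]
  · simp [Perm.mul_apply]

lemma blockNeg_inv : (blockNeg p a)⁻¹ = blockNeg p a :=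
  inv_eq_of_mul_eq_one_left blockNeg_mul_self

lemma blockNeg_conj_shear (v : Fin a → ZMod p) :
    blockNeg p a * shear p v * (blockNeg p a)⁻¹ = shear p (-v) := by
  rw [blockNeg_inv]
  ext x
  · simp [Perm.mul_apply]
  · simp [Perm.mul_apply]
    ring

lemma blockNeg_mul_blockLift (σ : Perm (Fin a)) :
    blockNeg p a * blockLift p a σ = blockLift p a σ * blockNeg p a := by
  ext x
  · simp [Perm.mul_apply]
  · simp [Perm.mul_apply]

lemma blockLift_inv_apply (σ : Perm (Fin a)) (x : Fin a × ZMod p) :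
    (blockLift p a σ)⁻¹ x = (σ⁻¹ x.1, x.2) := by
  have h : (blockLift p a σ)⁻¹ = blockLift p a σ⁻¹ := (map_inv (blockLift p a) σ).symm
  rw [h]; rfl

lemma blockLift_conj_shear (σ : Perm (Fin a)) (v : Fin a → ZMod p) :
    blockLift p a σ * shear p v * (blockLift p a σ)⁻¹ = shear p (fun i => v (σ⁻¹ i)) := by
  ext x
  · simp only [Perm.mul_apply, blockLift_inv_apply]; simp [Perm.inv_def]
  · simp only [Perm.mul_apply, blockLift_inv_apply]; simp [Perm.inv_def]

def permMulEquiv {α β : Type*} (e : α ≃ β) : Perm α ≃* Perm β :=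
  { e.permCongr with
    map_mul' := fun σ τ => by
      ext x
      simp [Equiv.permCongr_apply, Perm.mul_apply] }

@[simp] lemma permMulEquiv_apply {α β : Type*} (e : α ≃ β) (σ : Perm α) :
    permMulEquiv e σ = e.permCongr σ := rfl

lemma sign_permMulEquiv {α β : Type*} [DecidableEq α] [Fintype α] [DecidableEq β] [Fintype β]
    (e : α ≃ β) (σ : Perm α) : Equiv.Perm.sign (permMulEquiv e σ) = Equiv.Perm.sign σ := by
  simp [Equiv.Perm.sign_permCongr]

lemma blockLift_injective : Function.Injective (blockLift p a) := by
  intro σ τ h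
  apply Equiv.ext
  intro i
  simpa using congrArg Prod.fst (Equiv.ext_iff.mp h (i, 0))

lemma ih_conj_base (σ : Perm (Fin a)) (v : Fin a → ZMod p) :
    ιh p a r (blockLift p a σ) * ιh p a r (shear p v) * (ιh p a r (blockLift p a σ))⁻¹ =
      ιh p a r (shear p (fun i => v (σ⁻¹ i))) := by
  rw [← map_inv, ← map_mul, ← map_mul, blockLift_conj_shear]

lemma ih_neg_conj_base (v : Fin a → ZMod p) :
    ιh p a r (blockNeg p a) * ιh p a r (shear p v) * (ιh p a r (blockNeg p a))⁻¹ =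
      ιh p a r (shear p (-v)) := by
  rw [← map_inv, ← map_mul, ← map_mul, blockNeg_conj_shear]

lemma ih_neg_comm_lift (σ : Perm (Fin a)) :
    ιh p a r (blockNeg p a) * ιh p a r (blockLift p a σ) =
      ιh p a r (blockLift p a σ) * ιh p a r (blockNeg p a) := by
  rw [← map_mul, ← map_mul, blockNeg_mul_blockLift]

lemma mul_sq_one {G : Type*} [Group G] {c d : G} (hcd : c * d = d * c)
    (hc : c * c = 1) (hd : d * d = 1) : (c * d) * (c * d) = 1 := by
  have : (c * d) * (c * d) = c * (d * c) * d := by group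
  rw [this, ← hcd]
  have : c * (c * d) * d = (c * c) * (d * d) := by group
  rw [this, hc, hd, mul_one]

lemma factorization_factorial_step (p : ℕ) [Fact p.Prime] (m : ℕ) :
    (Nat.factorial m).factorization p = m / p + (Nat.factorial (m / p)).factorization p := by
  rw [Nat.factorization_def _ (Fact.out : p.Prime), Nat.factorization_def _ (Fact.out : p.Prime),
    ← padicValNat_mul_div_factorial (p := p) m, padicValNat_factorial_mul]
  omega

lemma factorization_factorial_zero (p m : ℕ) [Fact p.Prime] (h : m < p) :
    (Nat.factorial m).factorization p = 0 := by
  apply Nat.factorization_eq_zero_of_not_dvd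
  intro hdvd
  have := (Nat.Prime.dvd_factorial (Fact.out : p.Prime)).mp hdvd
  omega

section Generic
variable {G : Type*} [Group G]

lemma sup_conj_mem {H K : Subgroup G} {c : G}
    (hH : ∀ x ∈ H, c * x * c⁻¹ ∈ H ⊔ K) (hK : ∀ x ∈ K, c * x * c⁻¹ ∈ H ⊔ K) :
    ∀ x ∈ H ⊔ K, c * x * c⁻¹ ∈ H ⊔ K := by
  intro x hx
  have hle : H ⊔ K ≤ (H ⊔ K).comap (MulAut.conj c).toMonoidHom := by
    refine sup_le (fun y hy => ?_) (fun y hy => ?_) <;>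
      simp only [Subgroup.mem_comap, MulAut.conj_apply, MulEquiv.coe_toMonoidHom]
    · exact hH y hy
    · exact hK y hy
  simpa using hle hx

lemma mem_normalizer_of_involution {H : Subgroup G} {c : G}
    (hc2 : c * c = 1) (h : ∀ x ∈ H, c * x * c⁻¹ ∈ H) : c ∈ (Subgroup.normalizer (H : Set G)) := by
  have hci : c⁻¹ = c := inv_eq_of_mul_eq_one_left hc2
  rw [Subgroup.mem_normalizer_iff]
  intro x
  constructor
  · intro hx; exact h x hx
  · intro hx
    have h2 := h _ hx
    have key : c * (c * x * c⁻¹) * c⁻¹ = x := by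
      rw [hci]
      have h3 : c * (c * x * c) * c = c * c * x * (c * c) := by group
      rw [h3, hc2, one_mul, mul_one]
    rwa [key] at h2

lemma card_sup_ge {p : ℕ} [Fact p.Prime] [Finite G] {H K : Subgroup G} {m n : ℕ}
    (hH : Nat.card H = p ^ m) (hK : Nat.card K = p ^ n)
    (hinf : H ⊓ K ≤ ⊥) (hnorm : K ≤ (Subgroup.normalizer (H : Set G))) :
    ∃ k, Nat.card (H ⊔ K : Subgroup G) = p ^ k ∧ m + n ≤ k := by
  have hp1 : (1 : ℕ) < p := (Fact.out : p.Prime).one_lt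
  have hPG : IsPGroup p (K ⊔ H : Subgroup G) :=
    IsPGroup.to_sup_of_normal_right' (IsPGroup.of_card hK) (IsPGroup.of_card hH) hnorm
  rw [sup_comm] at hPG
  obtain ⟨k, hk⟩ := hPG.exists_card_eq
  refine ⟨k, hk, ?_⟩
  have hinj : Function.Injective
      (fun x : H × K => (⟨(x.1 : G) * x.2,
        mul_mem (le_sup_left (a := H) (b := K) x.1.2)
          (le_sup_right (a := H) (b := K) x.2.2)⟩ : (H ⊔ K : Subgroup G))) := by
    rintro ⟨⟨b₁, hb₁⟩, ⟨l₁, hl₁⟩⟩ ⟨⟨b₂, hb₂⟩, ⟨l₂, hl₂⟩⟩ hbl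
    have h0 : b₁ * l₁ = b₂ * l₂ := congrArg Subtype.val hbl
    have h1 : b₂⁻¹ * b₁ = l₂ * l₁⁻¹ := by
      have h2 := congrArg (fun z => b₂⁻¹ * z * l₁⁻¹) h0
      simpa [mul_assoc] using h2
    have h2 : b₂⁻¹ * b₁ ∈ H ⊓ K := by
      refine Subgroup.mem_inf.mpr ⟨mul_mem (inv_mem hb₂) hb₁, ?_⟩
      rw [h1]; exact mul_mem hl₂ (inv_mem hl₁)
    have h3 : b₂⁻¹ * b₁ = 1 := Subgroup.mem_bot.mp (hinf h2)
    have hb : b₂ = b₁ := inv_mul_eq_one.mp h3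
    have hl : l₂ = l₁ := by
      rw [h3] at h1
      exact mul_inv_eq_one.mp h1.symm
    simp [Prod.ext_iff, Subtype.ext_iff, hb, hl]
  have hle := Nat.card_le_card_of_injective _ hinj
  rw [Nat.card_prod, hH, hK, hk, ← pow_add] at hle
  exact (Nat.pow_le_pow_iff_right hp1).mp hle

end Generic

lemma key (p : ℕ) [Fact p.Prime] (hp2 : p ≠ 2) (m : ℕ) :
    ∃ P : Subgroup (Perm (Fin m)),
      Nat.card P = p ^ ((Nat.factorial m).factorization p) ∧
      (p ≤ m → ∃ ι ∈ (Subgroup.normalizer (P : Set (Perm (Fin m)))), ι * ι = 1 ∧ ι ≠ 1) ∧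
      (p + 2 ≤ m →
        ∃ g ∈ (Subgroup.normalizer (P : Set (Perm (Fin m)))), g * g = 1 ∧ g ≠ 1 ∧ Equiv.Perm.sign g = 1) := by
  induction m using Nat.strong_induction_on with
  | _ m IH =>
  have hp : p.Prime := Fact.out
  have hp3 : 3 ≤ p := by have := hp.two_le; omega
  rcases Nat.lt_or_ge m p with hm | hm
  · exact ⟨⊥, by rw [Subgroup.card_bot, factorization_factorial_zero p m hm, pow_zero],
      fun h => absurd h (by omega), fun h => absurd h (by omega)⟩
  haveI : NeZero p := ⟨hp.ne_zero⟩
  haveI : Fact (2 < p) := ⟨by omega⟩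
  have ha1 : 1 ≤ m / p := (Nat.one_le_div_iff hp.pos).mpr hm
  set a := m / p with ha_def
  set r := m % p with hr_def
  obtain ⟨Pa, hPacard, hPaA, -⟩ := IH a (Nat.div_lt_self (by omega) hp.one_lt)
  have hmar : p * a + r = m := Nat.div_add_mod m p
  have hcard_model : Fintype.card ((Fin a × ZMod p) ⊕ Fin r) = m := by
    rw [Fintype.card_sum, Fintype.card_prod, ZMod.card, Fintype.card_fin, Fintype.card_fin,
      mul_comm]
    exact hmar
  have e := Fintype.equivFinOfCardEq hcard_model
  set E := permMulEquiv e with hE_def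
  set Bs : Subgroup (Perm ((Fin a × ZMod p) ⊕ Fin r)) :=
    ((ιh p a r).comp (baseHom p a)).range with hBs_def
  set Ls : Subgroup (Perm ((Fin a × ZMod p) ⊕ Fin r)) :=
    Pa.map ((ιh p a r).comp (blockLift p a)) with hLs_def
  have hmem_Bs : ∀ v : Fin a → ZMod p, ιh p a r (shear p v) ∈ Bs := fun v =>
    MonoidHom.mem_range.mpr ⟨Multiplicative.ofAdd v, rfl⟩
  have hBs_elim : ∀ x ∈ Bs, ∃ v : Fin a → ZMod p, ιh p a r (shear p v) = x := by
    rintro x ⟨w, rfl⟩; exact ⟨Multiplicative.toAdd w, rfl⟩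
  have hmem_Ls : ∀ σ ∈ Pa, ιh p a r (blockLift p a σ) ∈ Ls := fun σ hσ =>
    Subgroup.mem_map.mpr ⟨σ, hσ, rfl⟩
  have hLs_elim : ∀ x ∈ Ls, ∃ σ ∈ Pa, ιh p a r (blockLift p a σ) = x := by
    rintro x ⟨σ, hσ, rfl⟩; exact ⟨σ, hσ, rfl⟩
  have hinjB : Function.Injective ((ιh p a r).comp (baseHom p a)) :=
    ιh_injective.comp baseHom_injective
  have hinjL : Function.Injective ((ιh p a r).comp (blockLift p a)) :=
    ιh_injective.comp blockLift_injective
  have hBs_card : Nat.card Bs = p ^ a := by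
    rw [← Nat.card_congr (MonoidHom.ofInjective hinjB).toEquiv,
      Nat.card_congr (Multiplicative.toAdd (α := Fin a → ZMod p)),
      Nat.card_eq_fintype_card, Fintype.card_fun, ZMod.card, Fintype.card_fin]
  have hLs_card : Nat.card Ls = p ^ ((Nat.factorial a).factorization p) := by
    rw [← hPacard]
    exact (Nat.card_congr (Subgroup.equivMapOfInjective Pa _ hinjL).toEquiv).symm
  have hinf : Bs ⊓ Ls ≤ ⊥ := by
    intro x hx
    obtain ⟨v, hv⟩ := hBs_elim x (Subgroup.mem_inf.mp hx).1
    obtain ⟨σ, hσPa, hσ⟩ := hLs_elim x (Subgroup.mem_inf.mp hx).2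
    have h1 : blockLift p a σ = shear p v := ιh_injective (by rw [hσ, ← hv])
    have hv0 : v = 0 := by
      funext i
      have h2 := congrArg Prod.snd (Equiv.ext_iff.mp h1 (i, 0))
      simpa using h2.symm
    rw [Subgroup.mem_bot, ← hv, hv0, shear_zero, map_one]
  have hnormBL : Ls ≤ (Subgroup.normalizer (Bs : Set (Perm ((Fin a × ZMod p) ⊕ Fin r)))) := by
    intro l hl
    obtain ⟨σ, hσPa, rfl⟩ := hl
    have hl_eq : ((ιh p a r).comp (blockLift p a)) σ = ιh p a r (blockLift p a σ) := rfl
    rw [hl_eq, Subgroup.mem_normalizer_iff]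
    intro x
    constructor
    · intro hx
      obtain ⟨v, rfl⟩ := hBs_elim x hx
      rw [ih_conj_base]
      exact hmem_Bs _
    · intro hx
      obtain ⟨v, hv⟩ := hBs_elim _ hx
      have h3 : x = (ιh p a r (blockLift p a σ))⁻¹ * ιh p a r (shear p v) *
          (ιh p a r (blockLift p a σ)) := by rw [hv]; group
      have h4 := ih_conj_base (p := p) (a := a) (r := r) σ⁻¹ v
      have h5 : (ιh p a r (blockLift p a σ⁻¹))⁻¹ = ιh p a r (blockLift p a σ) := by
        rw [← map_inv, ← map_inv, inv_inv]
      rw [h5] at h4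
      have h6 : ιh p a r (blockLift p a σ⁻¹) = (ιh p a r (blockLift p a σ))⁻¹ := by
        rw [← map_inv, ← map_inv]
      rw [h6] at h4
      rw [h3, h4]
      exact hmem_Bs _
  obtain ⟨k, hkcard, hkge⟩ := card_sup_ge hBs_card hLs_card hinf hnormBL
  have hdvd : (p : ℕ) ^ k ∣ Nat.factorial m := by
    have h6 := Subgroup.card_subgroup_dvd_card (Bs ⊔ Ls)
    rwa [hkcard, Nat.card_eq_fintype_card, Fintype.card_perm, hcard_model] at h6
  have hkle : k ≤ (Nat.factorial m).factorization p :=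
    (Nat.Prime.pow_dvd_iff_le_factorization hp (Nat.factorial_ne_zero m)).mp hdvd
  have hsplit : (Nat.factorial m).factorization p = a + (Nat.factorial a).factorization p :=
    factorization_factorial_step p m
  have hkeq : k = (Nat.factorial m).factorization p := by omega
  have hsup_card : Nat.card (Bs ⊔ Ls : Subgroup _) = p ^ ((Nat.factorial m).factorization p) := by
    rw [hkcard, hkeq]
  have htrans : ∀ t, t ∈ (Subgroup.normalizer ((Bs ⊔ Ls : Subgroup (Perm ((Fin a × ZMod p) ⊕ Fin r))) : Set (Perm ((Fin a × ZMod p) ⊕ Fin r)))) →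
      E t ∈ (Subgroup.normalizer (((Bs ⊔ Ls).map E.toMonoidHom) : Set (Perm (Fin m)))) := by
    intro t ht
    rw [← Subgroup.map_equiv_normalizer_eq (Bs ⊔ Ls) E]
    exact ⟨t, ht, rfl⟩
  set Ip : Perm ((Fin a × ZMod p) ⊕ Fin r) := ιh p a r (blockNeg p a) with hIp_def
  have hI2 : Ip * Ip = 1 := by rw [hIp_def, ← map_mul, blockNeg_mul_self, map_one]
  have hIN : Ip ∈ (Subgroup.normalizer ((Bs ⊔ Ls : Subgroup (Perm ((Fin a × ZMod p) ⊕ Fin r))) : Set (Perm ((Fin a × ZMod p) ⊕ Fin r)))) := by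
    apply mem_normalizer_of_involution hI2
    apply sup_conj_mem
    · intro x hx
      obtain ⟨v, rfl⟩ := hBs_elim x hx
      rw [hIp_def, ih_neg_conj_base]
      exact Subgroup.mem_sup_left (hmem_Bs _)
    · intro x hx
      obtain ⟨σ, hσ, rfl⟩ := hLs_elim x hx
      have h7 : Ip * ιh p a r (blockLift p a σ) * Ip⁻¹ = ιh p a r (blockLift p a σ) := by
        rw [hIp_def, ih_neg_comm_lift, mul_inv_cancel_right]
      rw [h7]
      exact Subgroup.mem_sup_right (hmem_Ls _ hσ)
  have hIne : Ip ≠ 1 := by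
    intro h
    have h7 := Equiv.ext_iff.mp h (Sum.inl (⟨0, by omega⟩, 1))
    simp only [hIp_def, ιh_apply, Equiv.sumCongr_apply, Sum.map_inl, blockNeg_apply,
      Perm.one_apply, Sum.inl.injEq, Prod.mk.injEq] at h7
    exact ZMod.neg_one_ne_one h7.2
  refine ⟨(Bs ⊔ Ls).map E.toMonoidHom, ?_, ?_, ?_⟩
  · rw [← hsup_card]
    exact (Nat.card_congr (Subgroup.equivMapOfInjective _ _ E.injective).toEquiv).symm
  · intro _
    exact ⟨E Ip, htrans _ hIN, by rw [← map_mul, hI2, map_one],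
      fun h => hIne (E.injective (by rw [h, map_one]))⟩
  · intro hm2
    have build : ∀ c : Perm ((Fin a × ZMod p) ⊕ Fin r),
        c ∈ (Subgroup.normalizer ((Bs ⊔ Ls : Subgroup (Perm ((Fin a × ZMod p) ⊕ Fin r))) : Set (Perm ((Fin a × ZMod p) ⊕ Fin r)))) → c * c = 1 → c ≠ 1 → Equiv.Perm.sign (E c) = 1 →
        ∃ g ∈ (Subgroup.normalizer (((Bs ⊔ Ls).map E.toMonoidHom) : Set (Perm (Fin m)))),
          g * g = 1 ∧ g ≠ 1 ∧ Equiv.Perm.sign g = 1 := by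
      intro c h1 h2 h3 h4
      exact ⟨E c, htrans c h1, by rw [← map_mul, h2, map_one],
        fun h => h3 (E.injective (by rw [h, map_one])), h4⟩
    rcases Int.units_eq_one_or (Equiv.Perm.sign (E Ip)) with hs | hs
    · exact build Ip hIN hI2 hIne hs
    rcases Nat.lt_or_ge a 2 with ha2 | ha2
    · -- a = 1, so r ≥ 2 : use the extra transposition
      have hr2 : 2 ≤ r := by
        have haa : a = 1 := by omega
        rw [haa, mul_one] at hmar
        omega
      set τp : Perm ((Fin a × ZMod p) ⊕ Fin r) :=
        Equiv.sumCongr (1 : Perm (Fin a × ZMod p))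
          (Equiv.swap (⟨0, by omega⟩ : Fin r) ⟨1, by omega⟩) with hτ_def
      have hτcomm : ∀ σ : Perm (Fin a × ZMod p), ιh p a r σ * τp = τp * ιh p a r σ :=
        fun σ => ιh_comm_inr σ _
      have hτ2 : τp * τp = 1 := by
        rw [hτ_def, Equiv.Perm.sumCongr_mul, one_mul, Equiv.swap_mul_self,
          Equiv.Perm.sumCongr_one]
      have hτN : τp ∈ (Subgroup.normalizer ((Bs ⊔ Ls : Subgroup (Perm ((Fin a × ZMod p) ⊕ Fin r))) : Set (Perm ((Fin a × ZMod p) ⊕ Fin r)))) := by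
        apply mem_normalizer_of_involution hτ2
        apply sup_conj_mem
        · intro x hx
          obtain ⟨v, rfl⟩ := hBs_elim x hx
          rw [← hτcomm, mul_inv_cancel_right]
          exact Subgroup.mem_sup_left (hmem_Bs _)
        · intro x hx
          obtain ⟨σ, hσ, rfl⟩ := hLs_elim x hx
          rw [← hτcomm, mul_inv_cancel_right]
          exact Subgroup.mem_sup_right (hmem_Ls _ hσ)
      have hcomm2 : Ip * τp = τp * Ip := hτcomm _
      have hg2 : (Ip * τp) * (Ip * τp) = 1 := mul_sq_one hcomm2 hI2 hτ2
      have hgne : Ip * τp ≠ 1 := by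
        intro h
        have h8 := Equiv.ext_iff.mp h (Sum.inr (⟨0, by omega⟩ : Fin r))
        simp only [hIp_def, hτ_def, Perm.mul_apply, ιh_apply, Equiv.sumCongr_apply,
          Sum.map_inr, Equiv.swap_apply_left, Sum.map_inl, Perm.one_apply,
          Sum.inr.injEq] at h8
        exact absurd h8 (by simp [Fin.ext_iff])
      have hsτ : Equiv.Perm.sign (E τp) = -1 := by
        rw [hE_def, sign_permMulEquiv, hτ_def, Equiv.Perm.sign_sumCongr, Equiv.Perm.sign_one,
          one_mul, Equiv.Perm.sign_swap (by simp [Fin.ext_iff])]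
      refine build (Ip * τp) (mul_mem hIN hτN) hg2 hgne ?_
      rw [map_mul, Equiv.Perm.sign_mul, hs, hsτ]
      decide
    · -- a ≥ 2 : use a normalizing involution of Pa (swap of blocks if Pa = ⊥)
      have hy : ∃ y : Perm (Fin a), y ∈ (Subgroup.normalizer (Pa : Set (Perm (Fin a)))) ∧ y * y = 1 ∧ y ≠ 1 := by
        rcases Nat.lt_or_ge a p with hap | hap
        · have hPa_bot : Pa = ⊥ := Subgroup.eq_bot_of_card_eq _ (by
            rw [hPacard, factorization_factorial_zero p a hap, pow_zero])
          refine ⟨Equiv.swap (⟨0, by omega⟩ : Fin a) ⟨1, by omega⟩, ?_,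
            Equiv.swap_mul_self _ _, ?_⟩
          · rw [hPa_bot, Subgroup.mem_normalizer_iff]
            intro x
            simp only [Subgroup.mem_bot]
            constructor
            · rintro rfl; simp
            · intro h
              have h9 := congrArg
                (fun z => (Equiv.swap (⟨0, by omega⟩ : Fin a) ⟨1, by omega⟩)⁻¹ * z *
                  (Equiv.swap (⟨0, by omega⟩ : Fin a) ⟨1, by omega⟩)) h
              simpa [mul_assoc] using h9
          · intro h
            have h10 := Equiv.ext_iff.mp h ⟨0, by omega⟩
            rw [Equiv.swap_apply_left, Perm.one_apply] at h10
            simp [Fin.ext_iff] at h10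
        · exact hPaA hap
      obtain ⟨y, hyN, hy2, hyne⟩ := hy
      set Kp := ιh p a r (blockLift p a y) with hKp_def
      have hK2 : Kp * Kp = 1 := by rw [hKp_def, ← map_mul, ← map_mul, hy2, map_one, map_one]
      have hKN : Kp ∈ (Subgroup.normalizer ((Bs ⊔ Ls : Subgroup (Perm ((Fin a × ZMod p) ⊕ Fin r))) : Set (Perm ((Fin a × ZMod p) ⊕ Fin r)))) := by
        apply mem_normalizer_of_involution hK2
        apply sup_conj_mem
        · intro x hx
          obtain ⟨v, rfl⟩ := hBs_elim x hx
          rw [hKp_def, ih_conj_base]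
          exact Subgroup.mem_sup_left (hmem_Bs _)
        · intro x hx
          obtain ⟨σ, hσ, rfl⟩ := hLs_elim x hx
          have h10 : Kp * ιh p a r (blockLift p a σ) * Kp⁻¹ =
              ιh p a r (blockLift p a (y * σ * y⁻¹)) := by
            rw [hKp_def, ← map_inv, ← map_inv, ← map_mul, ← map_mul, ← map_mul, ← map_mul]
          rw [h10]
          exact Subgroup.mem_sup_right
            (hmem_Ls _ ((Subgroup.mem_normalizer_iff.mp hyN σ).mp hσ))
      have hKne : Kp ≠ 1 := by
        intro h
        apply hyne
        apply blockLift_injective (p := p)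
        apply ιh_injective (r := r)
        rw [← hKp_def, h]
        simp
      have hcommIK : Ip * Kp = Kp * Ip := by rw [hIp_def, hKp_def, ih_neg_comm_lift]
      rcases Int.units_eq_one_or (Equiv.Perm.sign (E Kp)) with hs3 | hs3
      · exact build Kp hKN hK2 hKne hs3
      · have hg2 : (Ip * Kp) * (Ip * Kp) = 1 := mul_sq_one hcommIK hI2 hK2
        have hgne : Ip * Kp ≠ 1 := by
          intro h
          have h11 := Equiv.ext_iff.mp h (Sum.inl ((⟨0, by omega⟩ : Fin a), 1))
          simp only [hIp_def, hKp_def, Perm.mul_apply, ιh_apply, Equiv.sumCongr_apply,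
            Sum.map_inl, blockLift_apply, blockNeg_apply, Perm.one_apply,
            Sum.inl.injEq, Prod.mk.injEq] at h11
          exact ZMod.neg_one_ne_one h11.2
        refine build (Ip * Kp) (mul_mem hIN hKN) hg2 hgne ?_
        rw [map_mul, Equiv.Perm.sign_mul, hs, hs3]
        decide


theorem main (p : ℕ) [Fact p.Prime] (hodd : Odd p) (n : ℕ) (hn : p + 2 ≤ n)
    (Q : Sylow p (alternatingGroup (Fin n))) :
    Even (Nat.card (Subgroup.normalizer ((Q : Subgroup (alternatingGroup (Fin n))) : Set (alternatingGroup (Fin n))))) := by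
  have hp : p.Prime := Fact.out
  have hp2 : p ≠ 2 := by
    rintro rfl
    exact (Nat.not_odd_iff_even.mpr (by decide)) hodd
  have hp3 : 3 ≤ p := by have := hp.two_le; omega
  obtain ⟨P, hPcard, -, hB⟩ := key p hp2 n
  obtain ⟨g, hgN, hg2, hgne, hgsign⟩ := hB hn
  have hPG : IsPGroup p P := IsPGroup.of_card hPcard
  have hPle : P ≤ alternatingGroup (Fin n) := by
    intro x hx
    obtain ⟨k, hk⟩ := hPG ⟨x, hx⟩
    have hxk : x ^ (p ^ k) = 1 := by
      have := congrArg Subtype.val hk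
      simpa using this
    rw [Equiv.Perm.mem_alternatingGroup]
    rcases Int.units_eq_one_or (Equiv.Perm.sign x) with h | h
    · exact h
    · exfalso
      have h1 : Equiv.Perm.sign x ^ (p ^ k) = 1 := by rw [← map_pow, hxk, map_one]
      rw [h, (hodd.pow).neg_one_pow] at h1
      exact (by decide : ¬((-1 : ℤˣ) = 1)) h1
  have hgAlt : g ∈ alternatingGroup (Fin n) := Equiv.Perm.mem_alternatingGroup.mpr hgsign
  set P' : Subgroup ↥(alternatingGroup (Fin n)) := P.subgroupOf (alternatingGroup (Fin n)) with hP'_def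
  have hP'card : Nat.card P' = Nat.card P :=
    Nat.card_congr (Subgroup.subgroupOfEquivOfLe hPle).toEquiv
  haveI : Nontrivial (Fin n) := by
    refine ⟨⟨0, by omega⟩, ⟨1, by omega⟩, by simp [Fin.ext_iff]⟩
  have hcardA : 2 * Nat.card ↥(alternatingGroup (Fin n)) = Nat.factorial n := by
    have h2 := two_mul_card_alternatingGroup (α := Fin n)
    rwa [Fintype.card_perm, Fintype.card_fin, ← Nat.card_eq_fintype_card] at h2
  have hA0 : Nat.card ↥(alternatingGroup (Fin n)) ≠ 0 := Nat.card_pos.ne'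
  have hfA : (Nat.card ↥(alternatingGroup (Fin n))).factorization p = (Nat.factorial n).factorization p := by
    rw [← hcardA, Nat.factorization_mul two_ne_zero hA0]
    have h3 : (Nat.factorization 2) p = 0 := by
      rw [Nat.Prime.factorization Nat.prime_two]
      simp [Finsupp.single_apply, Ne.symm hp2]
    rw [Finsupp.add_apply, h3, zero_add]
  have hP'syl : Nat.card P' = p ^ ((Nat.card ↥(alternatingGroup (Fin n))).factorization p) := by
    rw [hP'card, hPcard, hfA]
  set Q0 : Sylow p ↥(alternatingGroup (Fin n)) := Sylow.ofCard P' hP'syl with hQ0_def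
  set g' : ↥(alternatingGroup (Fin n)) := ⟨g, hgAlt⟩ with hg'_def
  have hg'N : g' ∈ (Subgroup.normalizer ((Q0 : Subgroup ↥(alternatingGroup (Fin n))) : Set ↥(alternatingGroup (Fin n)))) := by
    have hcoe : (Q0 : Subgroup ↥(alternatingGroup (Fin n))) = P' := Sylow.coe_ofCard _ _
    rw [hcoe, hP'_def, Subgroup.mem_normalizer_iff]
    intro x
    rw [Subgroup.mem_subgroupOf, Subgroup.mem_subgroupOf]
    have h4 := Subgroup.mem_normalizer_iff.mp hgN (x : Equiv.Perm (Fin n))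
    have hcast : ((g' * x * g'⁻¹ : ↥(alternatingGroup (Fin n))) : Equiv.Perm (Fin n)) =
        g * (x : Equiv.Perm (Fin n)) * g⁻¹ := rfl
    rw [hcast]
    exact h4
  obtain ⟨c, hc⟩ := MulAction.exists_smul_eq (↥(alternatingGroup (Fin n))) Q0 Q
  have hQcoe : (Q : Subgroup ↥(alternatingGroup (Fin n))) = (Q0 : Subgroup ↥(alternatingGroup (Fin n))).map (MulAut.conj c).toMonoidHom := by
    rw [← hc, Sylow.coe_subgroup_smul, Subgroup.pointwise_smul_def]
    rfl
  have hNQ : (Subgroup.normalizer ((Q : Subgroup ↥(alternatingGroup (Fin n))) : Set ↥(alternatingGroup (Fin n)))) =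
      ((Subgroup.normalizer ((Q0 : Subgroup ↥(alternatingGroup (Fin n))) : Set ↥(alternatingGroup (Fin n))))).map (MulAut.conj c).toMonoidHom := by
    rw [hQcoe, Subgroup.map_equiv_normalizer_eq]
  set t : ↥(alternatingGroup (Fin n)) := MulAut.conj c g' with ht_def
  have htN : t ∈ (Subgroup.normalizer ((Q : Subgroup ↥(alternatingGroup (Fin n))) : Set ↥(alternatingGroup (Fin n)))) := by
    rw [hNQ]
    exact ⟨g', hg'N, rfl⟩
  have hg'2 : g' * g' = 1 := Subtype.ext hg2
  have ht2 : t * t = 1 := by rw [ht_def, ← map_mul, hg'2, map_one]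
  have htne : t ≠ 1 := by
    intro h
    apply hgne
    have h5 : g' = 1 := (MulAut.conj c).injective (by rw [← ht_def, h, map_one])
    exact congrArg Subtype.val h5
  have hord : orderOf t = 2 := orderOf_eq_prime (by rw [pow_two]; exact ht2) htne
  have hdvd2 : 2 ∣ Nat.card ((Subgroup.normalizer ((Q : Subgroup ↥(alternatingGroup (Fin n))) : Set ↥(alternatingGroup (Fin n))))) := by
    rw [← hord]
    exact Subgroup.orderOf_dvd_natCard _ htN
  exact even_iff_two_dvd.mpr hdvd2

end AltSylowEven

theorem alternating_sylow_normalizer_even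
    (p : ℕ) [Fact p.Prime] (hodd : Odd p) (n : ℕ) (hn : p + 2 ≤ n)
    (Q : Sylow p (alternatingGroup (Fin n))) :
    Even (Nat.card (Subgroup.normalizer ((Q : Subgroup (alternatingGroup (Fin n))) : Set (alternatingGroup (Fin n))))) := by
  exact AltSylowEven.main p hodd n hn Q
end

section
/- Let p be a prime, n ≥ 2 a natural number, and P a Sylow p-subgroup of the symmetric group Sym(n). Then the order of the normalizer N_{Sym(n)}(P) is even. -/
theorem symmetric_sylow_normalizer_even
    (p : ℕ) [Fact p.Prime] (n : ℕ) (hn : 2 ≤ n)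
    (P : Sylow p (Equiv.Perm (Fin n))) :
    Even (Nat.card (Subgroup.normalizer ((P : Subgroup (Equiv.Perm (Fin n))) : Set (Equiv.Perm (Fin n))))) := by
  have hp := Fact.out (p := p.Prime)
  rw [even_iff_two_dvd]
  rcases hp.eq_two_or_odd' with hp2 | hodd
  · -- p = 2 : P is nontrivial and P ≤ N
    subst hp2
    have hcard := Sylow.card_eq_multiplicity P
    have hdvd : (2 : ℕ) ∣ Nat.card (Equiv.Perm (Fin n)) := by
      rw [Nat.card_eq_fintype_card, Fintype.card_perm, Fintype.card_fin]
      exact Nat.dvd_factorial (by norm_num) hn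
    have hpos : 0 < (Nat.card (Equiv.Perm (Fin n))).factorization 2 := by
      refine Nat.Prime.factorization_pos_of_dvd Nat.prime_two ?_ hdvd
      simp [Nat.card_eq_fintype_card]
    have h2P : (2 : ℕ) ∣ Nat.card (P : Subgroup (Equiv.Perm (Fin n))) := by
      rw [hcard]
      exact dvd_pow_self 2 hpos.ne'
    exact h2P.trans (Subgroup.card_dvd_of_le Subgroup.le_normalizer)
  · -- p odd : P ≤ Alt, Frattini gives an odd permutation in the normalizer
    have hPalt : (P : Subgroup (Equiv.Perm (Fin n))) ≤ alternatingGroup (Fin n) := by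
      intro g hg
      rw [Equiv.Perm.mem_alternatingGroup]
      have hord : orderOf g ∣ Nat.card (P : Subgroup (Equiv.Perm (Fin n))) :=
        Subgroup.orderOf_dvd_natCard _ hg
      rw [Sylow.card_eq_multiplicity P] at hord
      obtain ⟨k, hk⟩ := (Nat.dvd_prime_pow hp).mp hord
      have hpow : g ^ p ^ k = 1 := by rw [← hk.2]; exact pow_orderOf_eq_one g
      have : (Equiv.Perm.sign g) ^ p ^ k = 1 := by
        rw [← map_pow, hpow, map_one]
      rcases Int.units_eq_one_or (Equiv.Perm.sign g) with h | h
      · exact h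
      · exfalso
        rw [h, (hodd.pow).neg_one_pow] at this
        exact (by decide : ¬((-1 : ℤˣ) = 1)) this
    have hsup : Subgroup.normalizer ((P : Subgroup (Equiv.Perm (Fin n))) : Set (Equiv.Perm (Fin n))) ⊔ alternatingGroup (Fin n) = ⊤ :=
      Sylow.normalizer_sup_eq_top' P hPalt
    -- find an odd permutation in the normalizer
    have hne : ¬ (Subgroup.normalizer ((P : Subgroup (Equiv.Perm (Fin n))) : Set (Equiv.Perm (Fin n))) ≤ alternatingGroup (Fin n)) := by
      intro hle
      have : alternatingGroup (Fin n) = ⊤ := by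
        rw [← hsup, sup_eq_right.mpr hle]
      have h01 : (⟨0, by omega⟩ : Fin n) ≠ ⟨1, by omega⟩ := by
        simp [Fin.ext_iff]
      have hswap : Equiv.swap (⟨0, by omega⟩ : Fin n) ⟨1, by omega⟩ ∈ alternatingGroup (Fin n) :=
        this ▸ Subgroup.mem_top _
      rw [Equiv.Perm.mem_alternatingGroup, Equiv.Perm.sign_swap h01] at hswap
      exact (by decide : ¬((-1 : ℤˣ) = 1)) hswap
    obtain ⟨g, hgN, hgA⟩ := SetLike.not_le_iff_exists.mp hne
    have hsign : Equiv.Perm.sign g = -1 := by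
      rcases Int.units_eq_one_or (Equiv.Perm.sign g) with h | h
      · exact absurd (Equiv.Perm.mem_alternatingGroup.mpr h) hgA
      · exact h
    have hordeven : 2 ∣ orderOf g := by
      rcases Nat.even_or_odd (orderOf g) with h | h
      · exact h.two_dvd
      · exfalso
        have : (Equiv.Perm.sign g) ^ orderOf g = 1 := by
          rw [← map_pow, pow_orderOf_eq_one, map_one]
        rw [hsign, h.neg_one_pow] at this
        exact (by decide : ¬((-1 : ℤˣ) = 1)) this
    exact hordeven.trans ((Subgroup.orderOf_mk g hgN ▸
      orderOf_dvd_natCard (⟨g, hgN⟩ : Subgroup.normalizer ((P : Subgroup (Equiv.Perm (Fin n))) : Set (Equiv.Perm (Fin n))))))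
end

section
/- Let G be a finite group, p an odd prime, and P a Sylow p-subgroup of G with |N_G(P)| odd. Then for every normal subgroup N of G, the only real conjugacy class of G/N whose size is not divisible by p is the class of the identity. That is, if x ∈ G/N is conjugate in G/N to x^{-1} and p does not divide the size of the conjugacy class of x in G/N, then x = 1. -/
open Subgroup

lemma aux_odd_real {H : Type*} [Group H] [Finite H] {K : Subgroup H}
    (hK : Odd (Nat.card K)) {x n : H} (hx : x ∈ K) (hn : n ∈ K)
    (hinv : n⁻¹ * x * n = x⁻¹) : x = 1 := by
  obtain ⟨j, hj⟩ : Odd (orderOf n) := hK.of_dvd_nat (K.orderOf_dvd_natCard hn)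
  have h1 : n⁻¹ * x⁻¹ * n = x := by
    have : (n⁻¹ * x * n)⁻¹ = x⁻¹⁻¹ := congrArg (·⁻¹) hinv
    simpa [mul_inv_rev, mul_assoc] using this
  have h2' : (n ^ 2)⁻¹ * x * n ^ 2 = x := by
    calc (n ^ 2)⁻¹ * x * n ^ 2 = n⁻¹ * (n⁻¹ * x * n) * n := by
          simp [pow_two, mul_inv_rev, mul_assoc]
      _ = n⁻¹ * x⁻¹ * n := by rw [hinv]
      _ = x := h1
  have hc : Commute (n ^ 2) x := by
    have := congrArg (fun y => n ^ 2 * y) h2'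
    simp only [mul_assoc, mul_inv_cancel_left] at this
    simpa [Commute, SemiconjBy, mul_assoc] using this.symm
  have h2 : Commute ((n ^ 2) ^ j) x := hc.pow_left j
  have hcancel : ((n ^ 2) ^ j)⁻¹ * x * (n ^ 2) ^ j = x := by
    rw [h2.inv_left.eq]; simp [mul_assoc]
  have hn1 : n ^ (2 * j + 1) = 1 := hj ▸ pow_orderOf_eq_one n
  have hxx : x = x⁻¹ := by
    calc x = (n ^ (2 * j + 1))⁻¹ * x * n ^ (2 * j + 1) := by rw [hn1]; simp
      _ = n⁻¹ * (((n ^ 2) ^ j)⁻¹ * x * (n ^ 2) ^ j) * n := by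
          rw [pow_succ, ← pow_mul]; simp [mul_inv_rev, mul_assoc]
      _ = n⁻¹ * x * n := by rw [hcancel]
      _ = x⁻¹ := hinv
  have hx2 : orderOf x ∣ 2 := orderOf_dvd_of_pow_eq_one (by
    rw [pow_two]; nth_rewrite 1 [hxx]; simp)
  have hxo : Odd (orderOf x) := hK.of_dvd_nat (K.orderOf_dvd_natCard hx)
  rcases (Nat.dvd_prime Nat.prime_two).mp hx2 with h | h
  · exact orderOf_eq_one_iff.mp h
  · rw [h] at hxo; exact absurd hxo (by decide)

lemma aux_core {H : Type*} [Group H] [Finite H] {p : ℕ} [Fact p.Prime]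
    (P : Sylow p H) (hodd : Odd (Nat.card (Subgroup.normalizer ((P : Subgroup H) : Set H))))
    (x : H) (hreal : IsConj x x⁻¹)
    (hsize : ¬ p ∣ (Subgroup.centralizer {x} : Subgroup H).index) : x = 1 := by
  classical
  set C : Subgroup H := Subgroup.centralizer {x} with hC
  -- a Sylow p-subgroup of H inside C
  obtain ⟨Q⟩ : Nonempty (Sylow p C) := Sylow.nonempty
  set Q' : Subgroup H := (Q : Subgroup C).map C.subtype with hQ'
  have hQ'le : Q' ≤ C := Subgroup.map_subtype_le _
  have hpQ' : IsPGroup p Q' := Q.2.map C.subtype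
  have hind : ¬ p ∣ Q'.index := by
    rw [hQ', Subgroup.index_map_subtype]
    exact Nat.Prime.not_dvd_mul Fact.out Q.not_dvd_index hsize
  set R : Sylow p H := hpQ'.toSylow hind with hR
  have hRC : (R : Subgroup H) ≤ C := hQ'le
  -- x centralizes R
  have hxcent : x ∈ Subgroup.centralizer (R : Set H) := by
    rw [Subgroup.mem_centralizer_iff]
    intro r hr
    exact (Subgroup.mem_centralizer_iff.mp (hRC hr) x rfl).symm
  -- the conjugating element
  obtain ⟨g, hg'⟩ := isConj_iff.mp hreal
  have hycent : (g⁻¹)⁻¹ * x * g⁻¹ ∈ Subgroup.centralizer (R : Set H) := by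
    rw [inv_inv, hg']
    exact Subgroup.inv_mem _ hxcent
  obtain ⟨n, hnmem, hn⟩ :=
    R.conj_eq_normalizer_conj_of_mem_centralizer x g⁻¹ hxcent hycent
  rw [inv_inv, hg'] at hn
  -- x lies in the normalizer of R
  have hxnorm : x ∈ Subgroup.normalizer ((R : Subgroup H) : Set H) := by
    rw [Subgroup.mem_normalizer_iff]
    intro h
    have key : ∀ k : H, k ∈ (R : Subgroup H) → x * k * x⁻¹ = k := by
      intro k hk
      have hc := Subgroup.mem_centralizer_iff.mp (hRC hk) x rfl
      rw [hc, mul_assoc, mul_inv_cancel, mul_one]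
    constructor
    · intro hh
      rw [key h hh]; exact hh
    · intro hh
      have e := key _ hh
      have e2 : x * h * x⁻¹ = h := by
        apply mul_left_cancel (a := x)
        apply mul_right_cancel (b := x⁻¹)
        exact e
      rw [← e2]
      exact hh
  -- the normalizer of R has odd order
  have hoddR : Odd (Nat.card (Subgroup.normalizer ((R : Subgroup H) : Set H))) := by
    obtain ⟨h, hh⟩ := MulAction.exists_smul_eq H P R
    have hcoe : (R : Subgroup H) = Subgroup.map (MulEquiv.toMonoidHom (MulAut.conj h))
        (P : Subgroup H) := by
      rw [← hh]; rfl
    rw [hcoe, ← Subgroup.map_equiv_normalizer_eq]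
    have e := Subgroup.equivMapOfInjective (Subgroup.normalizer ((P : Subgroup H) : Set H))
      (MulEquiv.toMonoidHom (MulAut.conj h)) (MulAut.conj h).injective
    rwa [← Nat.card_congr e.toEquiv]
  exact aux_odd_real hoddR hxnorm hnmem hn.symm


theorem real_pprime_classes_trivial_in_quotients
    {G : Type*} [Group G] [Finite G] (p : ℕ) [Fact p.Prime] (hoddp : Odd p)
    (P : Sylow p G)
    (hodd : Odd (Nat.card (Subgroup.normalizer ((P : Subgroup G) : Set G))))
    (N : Subgroup G) [N.Normal]
    (x : G ⧸ N) (hreal : IsConj x x⁻¹)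
    (hsize : ¬ p ∣ (Subgroup.centralizer {x} : Subgroup (G ⧸ N)).index) :
    x = 1 := by
  classical
  have hfin : Finite (G ⧸ N) := Quotient.finite _
  set π : G →* G ⧸ N := QuotientGroup.mk' N with hπ
  have hsurj : Function.Surjective π := QuotientGroup.mk'_surjective N
  set Pbar : Sylow p (G ⧸ N) := P.mapSurjective hsurj with hPbar
  have hcoe : (Pbar : Subgroup (G ⧸ N)) = Subgroup.map π (P : Subgroup G) := rfl
  -- Frattini-type argument: the normalizer of Pbar is contained in the image of N_G(P)
  have hfr : Subgroup.normalizer ((Pbar : Subgroup (G ⧸ N)) : Set (G ⧸ N)) ≤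
      Subgroup.map π (Subgroup.normalizer ((P : Subgroup G) : Set G)) := by
    intro y hy
    obtain ⟨g, rfl⟩ := hsurj y
    set M : Subgroup G := (P : Subgroup G) ⊔ N with hM
    have hNM : N ≤ M := le_sup_right
    have hPM : (P : Subgroup G) ≤ M := le_sup_left
    have hmapM : Subgroup.map π M = Subgroup.map π (P : Subgroup G) := by
      rw [hM, Subgroup.map_sup]
      have hbot : Subgroup.map π N = ⊥ := by
        rw [Subgroup.map_eq_bot_iff, QuotientGroup.ker_mk']
      rw [hbot, sup_bot_eq]
    have hmem : ∀ h : G, h ∈ M ↔ π h ∈ Subgroup.map π M := by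
      intro h
      constructor
      · exact fun hh => Subgroup.mem_map_of_mem π hh
      · rintro ⟨m, hm, hmh⟩
        have hker : m⁻¹ * h ∈ N := by
          rw [← QuotientGroup.ker_mk' N]
          have : π (m⁻¹ * h) = 1 := by
            rw [map_mul, map_inv, hmh]
            simp
          exact this
        have := M.mul_mem hm (hNM hker)
        simpa using this
    have hyN : π g ∈ Subgroup.normalizer ((Subgroup.map π M : Subgroup (G ⧸ N)) : Set (G ⧸ N)) := by
      rw [hmapM, ← hcoe]; exact hy
    have hgM : g ∈ Subgroup.normalizer (M : Set G) := by
      rw [Subgroup.mem_normalizer_iff]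
      intro h
      rw [hmem h, hmem (g * h * g⁻¹)]
      have heq : π (g * h * g⁻¹) = π g * π h * (π g)⁻¹ := by
        rw [map_mul, map_mul, map_inv]
      rw [heq]
      exact Subgroup.mem_normalizer_iff.mp hyN (π h)
    -- conjugate the two Sylow subgroups of M
    have h2 : ((g • P : Sylow p G) : Subgroup G) ≤ M := by
      intro z hz
      rw [Sylow.coe_subgroup_smul, Subgroup.mem_pointwise_smul_iff_inv_smul_mem] at hz
      have hz' : g⁻¹ * z * g ∈ M := hPM (by simpa [MulAut.smul_def, MulAut.conj] using hz)
      have := (Subgroup.mem_normalizer_iff.mp hgM (g⁻¹ * z * g)).mp hz'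
      simpa [mul_assoc] using this
    obtain ⟨k, hk⟩ := MulAction.exists_smul_eq (↥M) ((g • P).subtype h2) (P.subtype hPM)
    simp_rw [Sylow.smul_subtype, Subgroup.smul_def, smul_smul] at hk
    have hkg : ↑k * g ∈ Subgroup.normalizer ((P : Subgroup G) : Set G) :=
      Sylow.smul_eq_iff_mem_normalizer.mp (Sylow.subtype_injective hk)
    have hπk : π (k : G) ∈ Subgroup.map π (Subgroup.normalizer ((P : Subgroup G) : Set G)) := by
      apply Subgroup.map_mono (Subgroup.le_normalizer)
      rw [← hmapM]
      exact Subgroup.mem_map_of_mem π k.2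
    have hπkg : π ((k : G) * g) ∈ Subgroup.map π (Subgroup.normalizer ((P : Subgroup G) : Set G)) :=
      Subgroup.mem_map_of_mem π hkg
    have hgeq : π g = (π (k : G))⁻¹ * π ((k : G) * g) := by
      rw [map_mul]
      group
    rw [hgeq]
    exact Subgroup.mul_mem _ (Subgroup.inv_mem _ hπk) hπkg
  have hdvd1 : Nat.card (Subgroup.normalizer ((Pbar : Subgroup (G ⧸ N)) : Set (G ⧸ N))) ∣
      Nat.card (Subgroup.map π (Subgroup.normalizer ((P : Subgroup G) : Set G))) :=
    Subgroup.card_dvd_of_le hfr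
  have hdvd2 : Nat.card (Subgroup.map π (Subgroup.normalizer ((P : Subgroup G) : Set G))) ∣
      Nat.card (Subgroup.normalizer ((P : Subgroup G) : Set G)) :=
    Subgroup.card_dvd_of_surjective (π.subgroupMap _) (MonoidHom.subgroupMap_surjective π _)
  have hoddbar : Odd (Nat.card (Subgroup.normalizer ((Pbar : Subgroup (G ⧸ N)) : Set (G ⧸ N)))) :=
    hodd.of_dvd_nat (hdvd1.trans hdvd2)
  exact aux_core Pbar hoddbar x hreal hsize
end
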